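/- Let m ∈ ℕ, p ∈ (0,2], and φ = {φ_n}_{n=0}^∞ ∈ ℱ. Define Ψ₄(r) = (p/2)·φ₀(r) − Σ_{n=1}^∞ (n+1)φ_n(r) − r^m(2−r^m)/(1−r^m)² and let R₄ be the minimal positive root of Ψ₄(r) = 0. Suppose Ψ₄(r) < 0 on some interval (R₄, R₄+ε), ε > 0. Then for every r ∈ (R₄, R₄+ε) there exist a Schwarz function f(z) = Σ_{n=1}^∞ a_n z^n, a function ω ∈ ℬ_m, and z ∈ 𝔻 with |z| = r such that |a₁|^p·φ₀(r) + Σ_{n=1}^∞ (n+1)|a_{n+1}|φ_n(r) + |f′(ω(z)) − a₁| > φ₀(r); in fact one may take ω(z) = z^m and f(z) = z(a−z)/(1−az) with a ∈ [0,1) sufficiently close to 1. -/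

import Mathlib

open Filter Topology

private lemma aux_iter (m : ℕ) : ∀ k, k ≤ m → iteratedDeriv k (fun z : ℂ => z ^ m)
    = fun z => (m.descFactorial k : ℂ) * z ^ (m - k) := by
  intro k
  induction k with
  | zero => intro _; simp
  | succ k ih =>
    intro hk
    rw [iteratedDeriv_succ, ih (Nat.le_of_succ_le hk)]
    funext z
    rw [deriv_const_mul _ (by fun_prop)]
    simp [Nat.descFactorial_succ]
    ring_nf
    rw [Nat.sub_sub, Nat.add_comm 1 k]

private noncomputable def Acoef (α : ℝ) : ℕ → ℂ := fun n =>
  match n with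
  | 0 => 0
  | 1 => (α : ℂ)
  | (n+2) => ((α : ℂ)^2 - 1) * (α : ℂ)^n

private lemma aux_hasSum (α : ℝ) (hα0 : 0 ≤ α) (hα1 : α < 1) (w : ℂ) (hw : ‖w‖ < 1) :
    HasSum (fun n => Acoef α n * w ^ n) (w * ((α : ℂ) - w) / (1 - (α : ℂ) * w)) := by
  have habs : ‖(α : ℂ) * w‖ < 1 := by
    rw [norm_mul]
    calc ‖(α:ℂ)‖ * ‖w‖ ≤ 1 * ‖w‖ := by
          apply mul_le_mul_of_nonneg_right _ (norm_nonneg w)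
          simp [Complex.norm_real, abs_of_nonneg hα0, le_of_lt hα1]
      _ < 1 := by simpa using hw
  have hne : (1 : ℂ) - (α : ℂ) * w ≠ 0 := by
    intro h
    have : (α : ℂ) * w = 1 := by linear_combination -h
    rw [this] at habs; simp at habs
  have hg := hasSum_geometric_of_norm_lt_one habs
  have hg2 := hg.mul_left (((α : ℂ)^2 - 1) * w^2)
  have heq : (fun n => Acoef α (n + 2) * w ^ (n + 2))
      = fun n => ((α : ℂ)^2 - 1) * w^2 * ((α : ℂ) * w) ^ n := by
    funext n
    simp only [Acoef, mul_pow]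
    ring
  rw [← heq] at hg2
  have := (hasSum_nat_add_iff (f := fun n => Acoef α n * w ^ n) 2).mp hg2
  have e : w * ((α : ℂ) - w) / (1 - (α : ℂ) * w) = ((α : ℂ)^2 - 1) * w^2 * (1 - (α : ℂ) * w)⁻¹
      + ∑ i ∈ Finset.range 2, Acoef α i * w ^ i := by
    simp [Acoef, Finset.sum_range_succ]
    have hne2 : 1 - w * (α : ℂ) ≠ 0 := by rwa [mul_comm w]
    field_simp
    ring
  rw [e]; exact this

private lemma aux_bound (α : ℝ) (hα0 : 0 ≤ α) (hα1 : α < 1) (w : ℂ) (hw : ‖w‖ < 1) :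
    ‖w * ((α : ℂ) - w) / (1 - (α : ℂ) * w)‖ ≤ 1 := by
  have hkey : ‖(α : ℂ) - w‖ ≤ ‖1 - (α : ℂ) * w‖ := by
    rw [Complex.norm_def, Complex.norm_def]
    apply Real.sqrt_le_sqrt
    rw [Complex.normSq_apply, Complex.normSq_apply]
    have hw2 : w.re^2 + w.im^2 < 1 := by
      have := Complex.sq_norm w
      rw [Complex.normSq_apply] at this
      nlinarith [norm_nonneg w]
    simp [Complex.sub_re, Complex.sub_im, Complex.mul_re, Complex.mul_im]
    nlinarith [mul_nonneg (by nlinarith : (0:ℝ) ≤ 1 - α^2) (by nlinarith : (0:ℝ) ≤ 1 - w.re^2 - w.im^2)]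
  have hne : ‖1 - (α : ℂ) * w‖ ≥ 0 := norm_nonneg _
  rw [norm_div, norm_mul]
  rcases eq_or_lt_of_le hne with h | h
  · rw [← h]; simp
  · rw [div_le_one h]
    calc ‖w‖ * ‖(α:ℂ) - w‖ ≤ 1 * ‖1 - (α:ℂ)*w‖ := by
          apply mul_le_mul (le_of_lt hw) hkey (norm_nonneg _) zero_le_one
      _ = _ := one_mul _

private lemma aux_deriv (α x : ℝ) (hα0 : 0 < α) (hα1 : α < 1) (hx0 : 0 < x) (hx1 : x < 1) :
    ‖deriv (fun w : ℂ => w * ((α : ℂ) - w) / (1 - (α : ℂ) * w)) (x : ℂ) - (α : ℂ)‖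
      = (1 - α^2) * x * (2 - α*x) / (1 - α*x)^2 := by
  have hne' : (1 : ℝ) - α * x ≠ 0 := by nlinarith
  have hne : (1 : ℂ) - (α : ℂ) * (x : ℂ) ≠ 0 := by
    intro h
    apply hne'
    have := congrArg Complex.re h
    simpa using this
  have h1 : HasDerivAt (fun w : ℂ => w * ((α : ℂ) - w)) ((α : ℂ) - 2 * (x:ℂ)) (x : ℂ) := by
    have := (hasDerivAt_id (x:ℂ)).mul ((hasDerivAt_const (x:ℂ) (α:ℂ)).sub (hasDerivAt_id (x:ℂ)))
    simp only [id] at this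
    refine this.congr_deriv ?_
    simp only [Pi.sub_apply, id]
    ring
  have h2 : HasDerivAt (fun w : ℂ => 1 - (α : ℂ) * w) (-(α:ℂ)) (x : ℂ) := by
    have := (hasDerivAt_const (x:ℂ) (1:ℂ)).sub ((hasDerivAt_id (x:ℂ)).const_mul (α:ℂ))
    refine this.congr_deriv ?_
    ring
  have hd := h1.fun_div h2 hne
  rw [hd.deriv]
  have : (((α:ℂ) - 2*(x:ℂ)) * (1 - (α:ℂ)*(x:ℂ)) - (x:ℂ) * ((α:ℂ) - (x:ℂ)) * (-(α:ℂ))) / (1 - (α:ℂ)*(x:ℂ))^2 - (α:ℂ)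
      = (((1 - α^2) * x * (α*x - 2) / (1 - α*x)^2 : ℝ) : ℂ) := by
    push_cast
    field_simp
    ring
  rw [this, Complex.norm_real, Real.norm_eq_abs, abs_of_nonpos (div_nonpos_of_nonpos_of_nonneg (by nlinarith [mul_nonneg (mul_nonneg (by nlinarith : (0:ℝ) ≤ 1-α^2) hx0.le) (by nlinarith : (0:ℝ) ≤ 2 - α*x)]) (sq_nonneg _))]
  field_simp
  ring

private lemma aux_limit (p φ0 P x : ℝ) (hp0 : 0 < p) (hφ0 : 0 ≤ φ0) (hP : 0 ≤ P)
    (hx0 : 0 < x) (hx1 : x < 1) (N : ℕ)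
    (hL : 0 < -p * φ0 + 2 * P + 2 * (x * (2 - x) / (1 - x)^2)) :
    ∃ α : ℝ, 0 < α ∧ α < 1 ∧
      φ0 < α ^ p * φ0 + (1 - α^2) * α^N * P + (1 - α^2) * (x * (2 - α*x) / (1 - α*x)^2) := by
  set L := -p * φ0 + 2 * P + 2 * (x * (2 - x) / (1 - x)^2) with hLdef
  set G : ℝ → ℝ := fun a =>
    -((a ^ p - 1)/(a - 1)) * φ0 + (1+a)*a^N*P + (1+a)*(x*(2-a*x)/(1-a*x)^2) with hGdef
  have hslope : Tendsto (fun a : ℝ => (a ^ p - 1)/(a - 1)) (nhdsWithin 1 (Set.Iio 1)) (nhds p) := by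
    have hder : HasDerivAt (fun a : ℝ => a ^ p) p 1 := by
      have := Real.hasDerivAt_rpow_const (x := (1:ℝ)) (p := p) (Or.inl one_ne_zero)
      simpa using this
    have := hasDerivAt_iff_tendsto_slope.mp hder
    have h2 := this.mono_left (nhdsWithin_mono 1 (by intro a ha; simpa using ne_of_lt ha))
    refine h2.congr ?_
    intro a
    simp [slope_def_field, div_eq_div_iff]
  have hcont : Tendsto (fun a : ℝ => (1+a)*a^N*P + (1+a)*(x*(2-a*x)/(1-a*x)^2))
      (nhdsWithin 1 (Set.Iio 1)) (nhds (2 * P + 2 * (x * (2 - x) / (1 - x)^2))) := by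
    have hc : ContinuousAt (fun a : ℝ => (1+a)*a^N*P + (1+a)*(x*(2-a*x)/(1-a*x)^2)) 1 := by
      have hne : ((1:ℝ) - 1 * x) ^ 2 ≠ 0 := pow_ne_zero 2 (by nlinarith)
      fun_prop (disch := assumption)
    have := hc.continuousWithinAt (s := Set.Iio 1)
    have h2 := this.tendsto
    convert h2 using 2
    norm_num
  have hG : Tendsto G (nhdsWithin 1 (Set.Iio 1)) (nhds L) := by
    have := ((hslope.neg.mul_const φ0).add hcont)
    refine this.congr' ?_ |>.mono_right (le_of_eq ?_)
    · filter_upwards with a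
      simp [hGdef]; ring
    · congr 1; rw [hLdef]; ring
  have hev : ∀ᶠ a in nhdsWithin 1 (Set.Iio 1), 0 < G a := hG.eventually (eventually_gt_nhds hL)
  have hev2 : ∀ᶠ a in nhdsWithin 1 (Set.Iio 1), a ∈ Set.Ioo (0:ℝ) 1 := by
    filter_upwards [self_mem_nhdsWithin,
      eventually_nhdsWithin_of_eventually_nhds (eventually_gt_nhds (by norm_num : (0:ℝ) < 1))]
      with a ha hb
    exact ⟨hb, ha⟩
  have hne : (nhdsWithin (1:ℝ) (Set.Iio 1)).NeBot := nhdsLT_neBot 1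
  obtain ⟨a, hGa, ha01⟩ := (hev.and hev2).exists
  refine ⟨a, ha01.1, ha01.2, ?_⟩
  have hane : a - 1 ≠ 0 := by have := ha01.2; intro h; nlinarith
  have key : (1-a) * G a = (a ^ p - 1)*φ0 + (1-a^2)*a^N*P + (1-a^2)*(x*(2-a*x)/(1-a*x)^2) := by
    simp only [hGdef]
    field_simp
    ring
  have h3 : (0:ℝ) < (a ^ p - 1)*φ0 + (1-a^2)*a^N*P + (1-a^2)*(x*(2-a*x)/(1-a*x)^2) :=
    key ▸ mul_pos (show (0:ℝ) < 1 - a by have := ha01.2; linarith) hGa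
  nlinarith [h3]

/-- Theorem 4 of the paper, sharpness part.
If `Ψ₄(r) < 0` on some interval `(R₄, R₄+ε)` to the right of the minimal positive root
`R₄`, then for every `r` in that interval there are a Schwarz function `f`, a function
`ω ∈ ℬ_m` and `z` with `|z| = r` such that
`|a₁|^p φ₀(r) + Σ_{n≥1}(n+1)|a_{n+1}|φ_n(r) + |f′(ω(z)) − a₁| > φ₀(r)`. -/
theorem stmt_7
    (m : ℕ) (hm : 1 ≤ m) (p : ℝ) (hp0 : 0 < p) (hp2 : p ≤ 2)
    -- φ ∈ ℱ
    (φ : ℕ → ℝ → ℝ)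
    (hφc : ∀ n, ContinuousOn (φ n) (Set.Ico (0:ℝ) 1))
    (hφnn : ∀ n, ∀ r ∈ Set.Ico (0:ℝ) 1, 0 ≤ φ n r)
    (hφsum : ∀ r ∈ Set.Ico (0:ℝ) 1, Summable fun n => φ n r)
    (hφloc : TendstoLocallyUniformlyOn
      (fun N r => ∑ n ∈ Finset.range N, φ n r)
      (fun r => ∑' n, φ n r) Filter.atTop (Set.Ico (0:ℝ) 1))
    -- Ψ₄ and its minimal positive root R₄
    (Ψ : ℝ → ℝ)
    (hΨ : ∀ r : ℝ, Ψ r = (p / 2) * φ 0 r - (∑' n : ℕ, ((n : ℝ) + 2) * φ (n + 1) r)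
            - r ^ m * (2 - r ^ m) / (1 - r ^ m) ^ 2)
    (R₄ : ℝ) (hR₄ : R₄ ∈ Set.Ioo (0:ℝ) 1) (hroot : Ψ R₄ = 0)
    (hmin : ∀ r ∈ Set.Ioo (0:ℝ) 1, Ψ r = 0 → R₄ ≤ r)
    -- Ψ₄ < 0 on the interval (R₄, R₄ + ε) ⊆ (R₄, 1)
    (ε : ℝ) (hε : 0 < ε) (hRε : R₄ + ε ≤ 1)
    (hΨneg : ∀ r : ℝ, R₄ < r → r < R₄ + ε → Ψ r < 0) :
    ∀ r : ℝ, R₄ < r → r < R₄ + ε →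
      ∃ (f : ℂ → ℂ) (a : ℕ → ℂ) (ω : ℂ → ℂ) (z : ℂ),
        a 0 = 0 ∧
        (∀ w ∈ Metric.ball (0:ℂ) 1, HasSum (fun n => a n * w ^ n) (f w)) ∧
        (∀ w ∈ Metric.ball (0:ℂ) 1, ‖f w‖ ≤ 1) ∧
        DifferentiableOn ℂ ω (Metric.ball (0:ℂ) 1) ∧
        (∀ w ∈ Metric.ball (0:ℂ) 1, ‖ω w‖ ≤ 1) ∧
        (∀ k < m, iteratedDeriv k ω 0 = 0) ∧
        iteratedDeriv m ω 0 ≠ 0 ∧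
        z ∈ Metric.ball (0:ℂ) 1 ∧ ‖z‖ = r ∧
        φ 0 r < ‖a 1‖ ^ p * φ 0 r
          + (∑' n : ℕ, ((n : ℝ) + 2) * ‖a (n + 2)‖ * φ (n + 1) r)
          + ‖deriv f (ω z) - a 1‖ := by
  intro r hr1 hr2
  have hr0 : 0 < r := lt_trans hR₄.1 hr1
  have hrlt1 : r < 1 := lt_of_lt_of_le hr2 hRε
  have hrI : r ∈ Set.Ico (0:ℝ) 1 := ⟨hr0.le, hrlt1⟩
  set x : ℝ := r ^ m with hxdef
  have hx0 : 0 < x := pow_pos hr0 m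
  have hx1 : x < 1 := pow_lt_one₀ hr0.le hrlt1 (by omega)
  set φ0 : ℝ := φ 0 r with hφ0def
  have hφ0 : 0 ≤ φ0 := hφnn 0 r hrI
  set S : ℝ := ∑' n : ℕ, ((n : ℝ) + 2) * φ (n + 1) r with hSdef
  have hΨr : (p / 2) * φ0 - S - x * (2 - x) / (1 - x) ^ 2 < 0 := by
    have := hΨneg r hr1 hr2
    rw [hΨ r] at this
    exact this
  set c : ℝ := S + x * (2 - x) / (1 - x)^2 - (p/2) * φ0 with hcdef
  have hc : 0 < c := by rw [hcdef]; linarith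
  -- choose N
  have htermnn : ∀ n : ℕ, 0 ≤ ((n : ℝ) + 2) * φ (n + 1) r := fun n =>
    mul_nonneg (by positivity) (hφnn (n+1) r hrI)
  obtain ⟨N, hN⟩ : ∃ N : ℕ, S - c/2 ≤ ∑ n ∈ Finset.range N, ((n : ℝ) + 2) * φ (n + 1) r := by
    by_cases hsum : Summable (fun n : ℕ => ((n : ℝ) + 2) * φ (n + 1) r)
    · have ht := hsum.hasSum.tendsto_sum_nat
      have := ht.eventually (eventually_gt_nhds (show S - c/2 < S by linarith))
      obtain ⟨N, hN⟩ := this.exists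
      exact ⟨N, hN.le⟩
    · refine ⟨0, ?_⟩
      rw [hSdef, tsum_eq_zero_of_not_summable hsum]
      simp
      linarith
  set P : ℝ := ∑ n ∈ Finset.range N, ((n : ℝ) + 2) * φ (n + 1) r with hPdef
  have hPnn : 0 ≤ P := Finset.sum_nonneg fun n _ => htermnn n
  have hL : 0 < -p * φ0 + 2 * P + 2 * (x * (2 - x) / (1 - x)^2) := by
    have h1 := hN
    have h2 := hc
    rw [hcdef] at h1 h2
    linarith
  obtain ⟨α, hα0, hα1, hstar⟩ := aux_limit p φ0 P x hp0 hφ0 hPnn hx0 hx1 N hL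
  have h1α : (0:ℝ) ≤ 1 - α^2 := by nlinarith
  -- the data
  refine ⟨fun w : ℂ => w * ((α : ℂ) - w) / (1 - (α : ℂ) * w), Acoef α, fun z : ℂ => z ^ m,
    (r : ℂ), rfl, ?_, ?_, ?_, ?_, ?_, ?_, ?_, ?_, ?_⟩
  · intro w hw
    exact aux_hasSum α hα0.le hα1 w (by simpa using mem_ball_zero_iff.mp hw)
  · intro w hw
    exact aux_bound α hα0.le hα1 w (by simpa using mem_ball_zero_iff.mp hw)
  · exact (differentiable_pow m).differentiableOn
  · intro w hw
    rw [norm_pow]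
    exact pow_le_one₀ (norm_nonneg w)
      (le_of_lt (by simpa using mem_ball_zero_iff.mp hw))
  · intro k hk
    rw [aux_iter m k hk.le]
    simp [zero_pow (Nat.sub_ne_zero_of_lt hk)]
  · rw [aux_iter m m le_rfl]
    simp [Nat.descFactorial_self]
    exact_mod_cast Nat.factorial_ne_zero m
  · rw [mem_ball_zero_iff]
    simpa [Complex.norm_real, abs_of_nonneg hr0.le] using hrlt1
  · simp [Complex.norm_real, abs_of_nonneg hr0.le]
  · -- the main inequality
    have habsA : ∀ n : ℕ, ‖Acoef α (n+2)‖ = (1 - α^2) * α^n := by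
      intro n
      show ‖((α:ℂ)^2 - 1) * (α:ℂ)^n‖ = _
      rw [norm_mul, norm_pow, Complex.norm_real, Real.norm_eq_abs, abs_of_pos hα0]
      congr 1
      have h : ((α:ℂ)^2 - 1) = ((α^2 - 1 : ℝ) : ℂ) := by push_cast; ring
      rw [h, Complex.norm_real, Real.norm_eq_abs, abs_of_nonpos (by nlinarith)]
      ring
    have hA1 : ‖Acoef α 1‖ = α := by
      show ‖(α:ℂ)‖ = α
      rw [Complex.norm_real, Real.norm_eq_abs, abs_of_pos hα0]
    -- the derivative term
    have hωz : ((r:ℂ)) ^ m = ((x : ℝ) : ℂ) := by rw [hxdef]; push_cast; ring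
    have hD : ‖
        (deriv (fun w : ℂ => w * ((α : ℂ) - w) / (1 - (α : ℂ) * w)) (((r:ℂ)) ^ m) - Acoef α 1)‖
        = (1 - α^2) * x * (2 - α*x) / (1 - α*x)^2 := by
      rw [hωz]
      exact aux_deriv α x hα0 hα1 hx0 hx1
    -- summability of the series of coefficients
    set t : ℕ → ℝ := fun n => ((n : ℝ) + 2) * ‖Acoef α (n + 2)‖ * φ (n + 1) r with htdef
    have htnn : ∀ n, 0 ≤ t n := fun n =>
      mul_nonneg (mul_nonneg (by positivity) (norm_nonneg _)) (hφnn (n+1) r hrI)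
    set B : ℝ := ∑' n, φ n r with hBdef
    have hφB : ∀ n : ℕ, φ n r ≤ B := fun n =>
      Summable.le_tsum (hφsum r hrI) n (fun i _ => hφnn i r hrI)
    have hgeo : Summable (fun n : ℕ => ((n : ℝ) + 2) * α ^ n) := by
      have h1 := summable_pow_mul_geometric_of_norm_lt_one (R := ℝ) 1
        (r := α) (by rw [Real.norm_eq_abs, abs_of_pos hα0]; exact hα1)
      have h2 := summable_geometric_of_lt_one hα0.le hα1
      have := h1.add (h2.mul_left 2)
      refine this.congr fun n => ?_
      push_cast
      ring
    have htsummable : Summable t := by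
      refine Summable.of_nonneg_of_le htnn (fun n => ?_) (hgeo.mul_right ((1 - α^2) * B))
      rw [htdef]
      simp only
      rw [habsA n]
      calc ((n : ℝ) + 2) * ((1 - α^2) * α^n) * φ (n+1) r
          ≤ ((n : ℝ) + 2) * ((1 - α^2) * α^n) * B := by
            apply mul_le_mul_of_nonneg_left (hφB (n+1))
            exact mul_nonneg (by positivity) (mul_nonneg h1α (pow_nonneg hα0.le n))
        _ = ((n : ℝ) + 2) * α ^ n * ((1 - α^2) * B) := by ring
    have hT1 : ∑ n ∈ Finset.range N, t n ≤ ∑' n, t n :=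
      Summable.sum_le_tsum _ (fun i _ => htnn i) htsummable
    have hT2 : (1 - α^2) * α^N * P ≤ ∑ n ∈ Finset.range N, t n := by
      rw [hPdef, Finset.mul_sum]
      apply Finset.sum_le_sum
      intro n hn
      rw [htdef]
      simp only
      rw [habsA n]
      have hαNn : α ^ N ≤ α ^ n := pow_le_pow_of_le_one hα0.le hα1.le
        (le_of_lt (Finset.mem_range.mp hn))
      have hφn := hφnn (n+1) r hrI
      calc (1 - α^2) * α^N * (((n:ℝ) + 2) * φ (n + 1) r)
          ≤ (1 - α^2) * α^n * (((n:ℝ) + 2) * φ (n + 1) r) := by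
            apply mul_le_mul_of_nonneg_right _ (mul_nonneg (by positivity) hφn)
            exact mul_le_mul_of_nonneg_left hαNn h1α
        _ = ((n:ℝ) + 2) * ((1 - α^2) * α^n) * φ (n + 1) r := by ring
    show φ0 < ‖Acoef α 1‖ ^ p * φ0 + (∑' n, t n)
        + ‖deriv (fun w : ℂ => w * ((α : ℂ) - w) / (1 - (α : ℂ) * w)) (((r:ℂ)) ^ m) - Acoef α 1‖
    rw [hA1, hD]
    have hDge : (1 - α^2) * (x * (2 - α*x) / (1 - α*x)^2) = (1 - α^2) * x * (2 - α*x) / (1 - α*x)^2 := by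
      ring
    linarith [hstar, hT1, hT2]
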